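/- Let (m_j) and (n_j) be sequences of positive natural numbers with m_j ≥ 2n_j for all j, n_j → ∞, and n_j²/m_j → 0. Then lim_{j→∞} binom(m_j + 2n_j − 1, 2n_j) / binom(m_j, 2n_j) = 1. -/

import Mathlib

open Filter

namespace GBS

/-- Key inequality: if `8 N² ≤ M` and `0 < N`, then
`binom(M+2N-1, 2N) ≤ binom(M, 2N) · exp(16 N²/M)`. -/
lemma choose_key (M N : ℕ) (hN : 0 < N) (h8 : 8 * N ^ 2 ≤ M) :
    ((M + 2 * N - 1).choose (2 * N) : ℝ) ≤
      ((M.choose (2 * N)) : ℝ) * Real.exp (16 * ((N : ℝ) ^ 2 / M)) := by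
  set k := 2 * N with hk
  have hNk : 1 ≤ N := hN
  have hkM : k ≤ M := by
    have hs : N ≤ N ^ 2 := Nat.le_self_pow (by norm_num) N
    omega
  have hM0 : 0 < M := lt_of_lt_of_le (by positivity) h8
  have hMR : (0 : ℝ) < (M : ℝ) := by exact_mod_cast hM0
  -- identities
  have h1 : M.ascFactorial k = Nat.factorial k * (M + k - 1).choose k :=
    Nat.ascFactorial_eq_factorial_mul_choose' M k
  have h2 : M.descFactorial k = Nat.factorial k * M.choose k :=
    Nat.descFactorial_eq_factorial_mul_choose M k
  have hfact : (0 : ℝ) < (Nat.factorial k : ℝ) := by exact_mod_cast Nat.factorial_pos k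
  rw [← mul_le_mul_iff_right₀ hfact]
  have hmain : (M.ascFactorial k : ℝ) ≤
      (M.descFactorial k : ℝ) * Real.exp (16 * ((N : ℝ) ^ 2 / M)) := by
    -- asc ≤ (M+k)^k
    have hasc : M.ascFactorial k ≤ (M + k) ^ k := by
      have h := Nat.ascFactorial_le_pow_add (M - 1) k
      rw [Nat.sub_add_cancel hM0] at h
      exact h.trans (Nat.pow_le_pow_left (by omega) k)
    -- (M+1-k)^k ≤ desc
    have hdesc : (M + 1 - k) ^ k ≤ M.descFactorial k := Nat.pow_sub_le_descFactorial M k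
    have hascR : (M.ascFactorial k : ℝ) ≤ ((M : ℝ) + k) ^ k := by exact_mod_cast hasc
    have hcast : ((M + 1 - k : ℕ) : ℝ) = (M : ℝ) + 1 - k := by
      rw [Nat.cast_sub (by omega)]; push_cast; ring
    have hdescR : ((M : ℝ) + 1 - k) ^ k ≤ (M.descFactorial k : ℝ) := by
      rw [← hcast]; exact_mod_cast hdesc
    set x : ℝ := 8 * (N : ℝ) / M with hx
    have hx0 : 0 ≤ x := by positivity
    have hMk0 : (0 : ℝ) ≤ (M : ℝ) + 1 - k := by
      have : (k : ℝ) ≤ M := by exact_mod_cast hkM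
      linarith
    -- (M+k) ≤ (1+x)(M+1-k)
    have hstep : (M : ℝ) + k ≤ (1 + x) * ((M : ℝ) + 1 - k) := by
      have hkR : (k : ℝ) = 2 * N := by exact_mod_cast hk
      have h8R : 8 * (N : ℝ) ^ 2 ≤ M := by exact_mod_cast h8
      have hNR : (1 : ℝ) ≤ N := by exact_mod_cast hNk
      rw [hx, hkR]
      have hhalf : (M : ℝ) / 2 ≤ (M : ℝ) + 1 - 2 * N := by nlinarith
      have h4 : (4 : ℝ) * N ≤ 8 * (N : ℝ) / M * ((M : ℝ) + 1 - 2 * N) := by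
        calc (4 : ℝ) * N = 8 * (N : ℝ) / M * ((M : ℝ) / 2) := by field_simp; ring
          _ ≤ _ := by
              apply mul_le_mul_of_nonneg_left hhalf (by positivity)
      nlinarith [h4]
    calc (M.ascFactorial k : ℝ) ≤ ((M : ℝ) + k) ^ k := hascR
      _ ≤ ((1 + x) * ((M : ℝ) + 1 - k)) ^ k := by
          apply pow_le_pow_left₀ (by positivity) hstep
      _ = (1 + x) ^ k * ((M : ℝ) + 1 - k) ^ k := mul_pow _ _ _
      _ ≤ Real.exp x ^ k * (M.descFactorial k : ℝ) := by
          apply mul_le_mul _ hdescR (by positivity) (by positivity)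
          exact pow_le_pow_left₀ (by linarith) (by linarith [Real.add_one_le_exp x]) k
      _ = Real.exp (k * x) * (M.descFactorial k : ℝ) := by
          rw [← Real.exp_nat_mul]
      _ = (M.descFactorial k : ℝ) * Real.exp (16 * ((N : ℝ) ^ 2 / M)) := by
          rw [mul_comm]
          congr 1
          rw [hx]
          have hkR : (k : ℝ) = 2 * N := by exact_mod_cast hk
          rw [hkR]; field_simp; ring
  calc (Nat.factorial k : ℝ) * ((M + k - 1).choose k : ℝ) = (M.ascFactorial k : ℝ) := by
        rw [h1]; push_cast; ring
    _ ≤ (M.descFactorial k : ℝ) * Real.exp (16 * ((N : ℝ) ^ 2 / M)) := hmain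
    _ = (Nat.factorial k : ℝ) * ((M.choose k : ℝ) * Real.exp (16 * ((N : ℝ) ^ 2 / M))) := by
        rw [h2]; push_cast; ring

/-- Let `(m_j)`, `(n_j)` be sequences of positive naturals with
`m_j ≥ 2n_j`, `n_j → ∞`, and `n_j²/m_j → 0`. Then
`lim_{j→∞} binom(m_j + 2n_j − 1, 2n_j) / binom(m_j, 2n_j) = 1`. -/
theorem tendsto_choose_ratio (m n : ℕ → ℕ)
    (hm : ∀ j, 0 < m j) (hn : ∀ j, 0 < n j) (h2 : ∀ j, 2 * n j ≤ m j)
    (hninf : Tendsto n atTop atTop)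
    (hratio : Tendsto (fun j => (n j : ℝ) ^ 2 / m j) atTop (nhds 0)) :
    Tendsto (fun j =>
        (((m j + 2 * n j - 1).choose (2 * n j) : ℝ)) / ((m j).choose (2 * n j) : ℝ))
      atTop (nhds 1) := by
  have hbpos : ∀ j, (0 : ℝ) < ((m j).choose (2 * n j) : ℝ) := fun j => by
    exact_mod_cast Nat.choose_pos (h2 j)
  -- upper bound function
  have hh : Tendsto (fun j => Real.exp (16 * ((n j : ℝ) ^ 2 / m j))) atTop (nhds 1) := by
    have : Tendsto (fun j => 16 * ((n j : ℝ) ^ 2 / m j)) atTop (nhds (16 * 0)) :=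
      hratio.const_mul 16
    rw [mul_zero] at this
    simpa [Function.comp_def] using (Real.continuous_exp.tendsto 0).comp this
  apply tendsto_of_tendsto_of_tendsto_of_le_of_le' tendsto_const_nhds hh
  · -- 1 ≤ ratio
    filter_upwards with j
    rw [le_div_iff₀ (hbpos j), one_mul]
    have : m j ≤ m j + 2 * n j - 1 := by have := hn j; omega
    exact_mod_cast Nat.choose_le_choose (2 * n j) this
  · -- eventually ratio ≤ exp(16 n²/m)
    have hev : ∀ᶠ j in atTop, (n j : ℝ) ^ 2 / m j < 1 / 9 :=
      hratio.eventually (gt_mem_nhds (by norm_num))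
    filter_upwards [hev] with j hj
    have hm8 : 8 * n j ^ 2 ≤ m j := by
      have hmR : (0 : ℝ) < (m j : ℝ) := by exact_mod_cast hm j
      have := (div_lt_iff₀ hmR).mp hj
      have h9 : 9 * (n j : ℝ) ^ 2 < m j := by nlinarith
      have : (8 * n j ^ 2 : ℝ) ≤ (m j : ℝ) := by push_cast; nlinarith [sq_nonneg ((n j : ℝ))]
      exact_mod_cast this
    rw [div_le_iff₀ (hbpos j)]
    have := choose_key (m j) (n j) (hn j) hm8
    linarith [this]

end GBS
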